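/- Let A be a unital C*-algebra, let s, n ≥ 1 be integers, and set w = exp(2πi/s). Let u = (u_ij) be an n×n matrix over A satisfying the level-s cubic relations: u is unitary, the transpose u^t is unitary, each u_ij is normal, each p_ij = u_ij u_ij* is a projection, and u_ij^s = p_ij. With the convention u_ij^0 = p_ij, define A^p_{ij} = (1/s) Σ_{r=0}^{s-1} w^{rp} u_ij^r for p ∈ ℤ/sℤ. Then each A^p_{ij} is a projection, and the matrix M_{(p,i),(q,j)} = A^{q-p}_{ij}, indexed by (ℤ/sℤ) × {1,…,n}, is a magic unitary: all its entries are projections and each of its rows and columns sums to 1. -/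

import Mathlib

/-- From a matrix `u` satisfying the level-`s` cubic relations, form
`A^p_{ij} = (1/s) Σ_{r=0}^{s-1} w^{rp} u_ij^r` with the convention
`u_ij^0 = p_ij = u_ij u_ij*`, where `w = exp(2πi/s)`. -/
noncomputable def cubicToSudoku (s n : ℕ) [NeZero s] {A : Type*} [CStarAlgebra A]
    (u : Fin n → Fin n → A) (p : ZMod s) (i j : Fin n) : A :=
  (s : ℂ)⁻¹ • ∑ r ∈ Finset.range s,
    (Complex.exp (2 * Real.pi * Complex.I / s) ^ (r * p.val)) •
      (if r = 0 then u i j * star (u i j) else u i j ^ r)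

set_option linter.unusedSectionVars false
set_option linter.unusedVariables false

namespace CubicAux

variable (s : ℕ) [NeZero s]

noncomputable def ζ : ℂ := Complex.exp (2 * Real.pi * Complex.I / s)

lemma hs0 : (s : ℂ) ≠ 0 := Nat.cast_ne_zero.mpr (NeZero.ne s)

lemma zeta_pow_s : ζ s ^ s = 1 := by
  rw [ζ, ← Complex.exp_nat_mul]
  rw [mul_div_assoc', mul_comm, mul_div_assoc, div_self (hs0 s), mul_one]
  exact Complex.exp_two_pi_mul_I

lemma zeta_pow_mod (k : ℕ) : ζ s ^ k = ζ s ^ (k % s) := by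
  conv_lhs => rw [← Nat.div_add_mod k s]
  rw [pow_add, pow_mul, zeta_pow_s, one_pow, one_mul]

noncomputable def e (m : ZMod s) : ℂ := ζ s ^ m.val

lemma e_zero : e s 0 = 1 := by simp [e]

lemma e_add (a b : ZMod s) : e s (a + b) = e s a * e s b := by
  rw [e, e, e, ← pow_add, ZMod.val_add, ← zeta_pow_mod]

lemma e_mul_pow (m k : ZMod s) : e s (m * k) = ζ s ^ (m.val * k.val) := by
  rw [e, ZMod.val_mul, ← zeta_pow_mod]

lemma e_mul_e_neg (m : ZMod s) : e s m * e s (-m) = 1 := by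
  rw [← e_add, add_neg_cancel, e_zero]

lemma conj_e (m : ZMod s) : (starRingEnd ℂ) (e s m) = e s (-m) := by
  have habs : ‖e s m‖ = 1 := by
    rw [e, norm_pow, ζ, Complex.norm_exp]
    have : (2 * (Real.pi : ℂ) * Complex.I / s).re = 0 := by
      rw [show (2 * (Real.pi : ℂ) * Complex.I / s) = ((2 * Real.pi / s : ℝ) : ℂ) * Complex.I by
        push_cast; ring]
      simp
    rw [this, Real.exp_zero, one_pow]
  have h1 : (starRingEnd ℂ) (e s m) * e s m = 1 := by
    rw [mul_comm, Complex.mul_conj, Complex.normSq_eq_norm_sq, habs]; norm_num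
  calc (starRingEnd ℂ) (e s m) = (starRingEnd ℂ) (e s m) * (e s m * e s (-m)) := by
        rw [e_mul_e_neg, mul_one]
    _ = ((starRingEnd ℂ) (e s m) * e s m) * e s (-m) := by ring
    _ = e s (-m) := by rw [h1, one_mul]

lemma range_to_zmod {M : Type*} [AddCommMonoid M] (g : ZMod s → M) :
    ∑ r ∈ Finset.range s, g r = ∑ m : ZMod s, g m := by
  refine Finset.sum_nbij' (fun r => (r : ZMod s)) (fun m => m.val)
    (fun r _ => Finset.mem_univ _) (fun m _ => Finset.mem_range.mpr (ZMod.val_lt m))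
    (fun r hr => ZMod.val_natCast_of_lt (Finset.mem_range.mp hr))
    (fun m _ => by simp [ZMod.natCast_val, ZMod.cast_id]) (fun r _ => rfl)

lemma sum_e (k : ZMod s) : ∑ m : ZMod s, e s (m * k) = if k = 0 then (s : ℂ) else 0 := by
  split_ifs with hk
  · subst hk
    simp [e_zero, Finset.card_univ]
  · have h1 : ζ s ^ k.val ≠ 1 := by
      apply (Complex.isPrimitiveRoot_exp s (NeZero.ne s)).pow_ne_one_of_pos_of_lt
      · exact (fun h => hk ((ZMod.val_eq_zero k).mp h))
      · exact ZMod.val_lt k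
    have : ∑ m : ZMod s, e s (m * k) = ∑ r ∈ Finset.range s, (ζ s ^ k.val) ^ r := by
      rw [← range_to_zmod s (fun m => e s (m * k))]
      refine Finset.sum_congr rfl fun r hr => ?_
      rw [e_mul_pow, ZMod.val_natCast_of_lt (Finset.mem_range.mp hr), mul_comm r k.val, pow_mul]
    rw [this, geom_sum_eq h1, ← pow_mul, mul_comm, pow_mul, zeta_pow_s, one_pow,
      sub_self, zero_div]

variable {A : Type*} [CStarAlgebra A]

noncomputable def vz (a : A) (m : ZMod s) : A :=
  if m = 0 then a * star a else a ^ m.val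

noncomputable def Qe (a : A) (p : ZMod s) : A :=
  (s : ℂ)⁻¹ • ∑ m : ZMod s, e s (m * p) • vz s a m

section
variable (a : A)
variable (hnormal : a * star a = star a * a)
variable (hsa : star (a * star a) = a * star a)
variable (hid : (a * star a) * (a * star a) = a * star a)
variable (hpow : a ^ s = a * star a)

include hsa hid in
lemma p0_mul_a : (a * star a) * a = a := by
  have key : ((a * star a) * a - a) * star ((a * star a) * a - a) = 0 := by
    have h1 : star ((a * star a) * a - a) = star a * (a * star a) - star a := by
      rw [star_sub, star_mul, hsa]
    rw [h1]
    calc ((a * star a) * a - a) * (star a * (a * star a) - star a)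
        = (a * star a) * (a * star a) * (a * star a) - (a * star a) * (a * star a)
          - (a * star a) * (a * star a) + a * star a := by noncomm_ring
      _ = 0 := by rw [hid, hid]; abel
  have := CStarRing.mul_star_self_eq_zero_iff ((a * star a) * a - a) |>.mp key
  linear_combination (norm := noncomm_ring) this

include hnormal hsa hid in
lemma a_mul_p0 : a * (a * star a) = a := by
  rw [hnormal, ← mul_assoc]
  exact p0_mul_a a hsa hid

include hnormal hsa hid in
lemma p0_pow (r : ℕ) (hr : 1 ≤ r) :
    (a * star a) * a ^ r = a ^ r ∧ a ^ r * (a * star a) = a ^ r := by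
  induction r with
  | zero => omega
  | succ k ih =>
    rcases Nat.eq_or_lt_of_le hr with h | h
    · simp only [← h, pow_one]
      exact ⟨p0_mul_a a hsa hid, a_mul_p0 a hnormal hsa hid⟩
    · have hk : 1 ≤ k := by omega
      obtain ⟨h1, h2⟩ := ih hk
      constructor
      · rw [pow_succ, ← mul_assoc, h1]
      · rw [pow_succ, mul_assoc, a_mul_p0 a hnormal hsa hid]

include hnormal hsa hid hpow in
lemma vz_mul (m k : ZMod s) : vz s a m * vz s a k = vz s a (m + k) := by
  by_cases hm : m = 0
  · subst hm
    by_cases hk : k = 0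
    · subst hk; simpa [vz] using hid
    · have hk1 : 1 ≤ k.val := Nat.pos_of_ne_zero (fun h => hk ((ZMod.val_eq_zero k).mp h))
      simp only [vz, if_pos rfl, if_neg hk, zero_add]
      exact (p0_pow a hnormal hsa hid k.val hk1).1
  · by_cases hk : k = 0
    · subst hk
      have hm1 : 1 ≤ m.val := Nat.pos_of_ne_zero (fun h => hm ((ZMod.val_eq_zero m).mp h))
      simp only [vz, if_pos rfl, if_neg hm, add_zero]
      exact (p0_pow a hnormal hsa hid m.val hm1).2
    · have hm1 : 1 ≤ m.val := Nat.pos_of_ne_zero (fun h => hm ((ZMod.val_eq_zero m).mp h))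
      have hk1 : 1 ≤ k.val := Nat.pos_of_ne_zero (fun h => hk ((ZMod.val_eq_zero k).mp h))
      have hmlt := ZMod.val_lt m
      have hklt := ZMod.val_lt k
      have hL : vz s a m * vz s a k = a ^ (m.val + k.val) := by
        simp only [vz, if_neg hm, if_neg hk, pow_add]
      rcases lt_or_ge (m.val + k.val) s with hlt | hge
      · have hvadd : (m + k).val = m.val + k.val := ZMod.val_add_of_lt hlt
        have hne : m + k ≠ 0 := by
          intro h0; rw [h0, ZMod.val_zero] at hvadd; omega
        rw [hL, vz, if_neg hne, hvadd]
      · obtain ⟨t, htt⟩ : ∃ t, m.val + k.val = s + t := ⟨m.val + k.val - s, by omega⟩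
        have hts : t < s := by omega
        have hmod : (m + k).val = t := by
          rw [ZMod.val_add, htt, Nat.add_mod_left, Nat.mod_eq_of_lt hts]
        have hPt : a ^ (m.val + k.val) = (a * star a) * a ^ t := by
          rw [htt, pow_add, hpow]
        by_cases h0 : m + k = 0
        · have hz : t = 0 := by rw [h0, ZMod.val_zero] at hmod; omega
          rw [hL, hPt, hz, pow_zero, mul_one, vz, if_pos h0]
        · have hz : 1 ≤ t :=
            Nat.pos_of_ne_zero (fun h => h0 ((ZMod.val_eq_zero _).mp (hmod.trans h)))
          rw [hL, hPt, (p0_pow a hnormal hsa hid _ hz).1, vz, if_neg h0, hmod]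

include hnormal hsa hid in
lemma pow_mul_star_pow (r : ℕ) (hr : 1 ≤ r) : a ^ r * (star a) ^ r = a * star a := by
  induction r with
  | zero => omega
  | succ k ih =>
    rcases Nat.eq_or_lt_of_le hr with h | h
    · simp [← h]
    · have hk : 1 ≤ k := by omega
      rw [pow_succ' a, pow_succ (star a), show a * a ^ k * ((star a) ^ k * star a)
          = a * (a ^ k * (star a) ^ k) * star a by noncomm_ring, ih hk,
        a_mul_p0 a hnormal hsa hid]

include hnormal hsa hid hpow in
lemma vz_star (m : ZMod s) : star (vz s a m) = vz s a (-m) := by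
  have hP : vz s a 0 = a * star a := by simp [vz]
  have hvzP : vz s a m * vz s a 0 = vz s a m := by
    rw [vz_mul s a hnormal hsa hid hpow, add_zero]
  have hPvz : vz s a 0 * star (vz s a m) = star (vz s a m) := by
    conv_rhs => rw [← hvzP]
    rw [star_mul, hP, hsa]
  have hself : vz s a m * star (vz s a m) = a * star a := by
    by_cases hm : m = 0
    · subst hm; rw [hP, hsa, hid]
    · have hm1 : 1 ≤ m.val := Nat.pos_of_ne_zero (fun h => hm ((ZMod.val_eq_zero m).mp h))
      rw [vz, if_neg hm]
      simp only [star_pow]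
      exact pow_mul_star_pow a hnormal hsa hid m.val hm1
  calc star (vz s a m) = vz s a 0 * star (vz s a m) := (hPvz).symm
    _ = (vz s a (-m) * vz s a m) * star (vz s a m) := by
        rw [vz_mul s a hnormal hsa hid hpow, neg_add_cancel]
    _ = vz s a (-m) * (vz s a m * star (vz s a m)) := by rw [mul_assoc]
    _ = vz s a (-m) * vz s a 0 := by rw [hself, hP]
    _ = vz s a (-m) := by rw [vz_mul s a hnormal hsa hid hpow, add_zero]

include hnormal hsa hid hpow in
lemma Qe_mul (p : ZMod s) : Qe s a p * Qe s a p = Qe s a p := by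
  have hSS : (∑ m : ZMod s, e s (m * p) • vz s a m) * (∑ m : ZMod s, e s (m * p) • vz s a m)
      = (s : ℂ) • ∑ m : ZMod s, e s (m * p) • vz s a m := by
    rw [Finset.sum_mul_sum]
    calc ∑ m : ZMod s, ∑ k : ZMod s, (e s (m * p) • vz s a m) * (e s (k * p) • vz s a k)
        = ∑ m : ZMod s, ∑ k : ZMod s, e s ((m + k) * p) • vz s a (m + k) := by
          refine Finset.sum_congr rfl fun m _ => Finset.sum_congr rfl fun k _ => ?_
          rw [smul_mul_smul_comm, ← e_add, vz_mul s a hnormal hsa hid hpow, add_mul]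
      _ = ∑ _m : ZMod s, ∑ k : ZMod s, e s (k * p) • vz s a k := by
          refine Finset.sum_congr rfl fun m _ => ?_
          exact Fintype.sum_equiv (Equiv.addLeft m) _ _ (fun k => rfl)
      _ = (s : ℂ) • ∑ m : ZMod s, e s (m * p) • vz s a m := by
          rw [Finset.sum_const, Finset.card_univ, ZMod.card, ← Nat.cast_smul_eq_nsmul ℂ]
  rw [Qe, smul_mul_smul_comm, hSS, smul_smul]
  congr 1
  field_simp

include hnormal hsa hid hpow in
lemma Qe_star (p : ZMod s) : star (Qe s a p) = Qe s a p := by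
  have hsum : ∑ m : ZMod s, star (e s (m * p) • vz s a m)
      = ∑ m : ZMod s, e s (m * p) • vz s a m := by
    refine Fintype.sum_equiv (Equiv.neg (ZMod s)) _ _ fun m => ?_
    show star (e s (m * p) • vz s a m) = e s ((-m) * p) • vz s a (-m)
    rw [star_smul, vz_star s a hnormal hsa hid hpow, RCLike.star_def, conj_e, neg_mul]
  rw [Qe, star_smul, star_sum, hsum]
  congr 1
  simp

lemma Qe_sum : ∑ p : ZMod s, Qe s a p = a * star a := by
  have h1 : ∑ p : ZMod s, Qe s a p
      = (s : ℂ)⁻¹ • ∑ m : ZMod s, (∑ p : ZMod s, e s (m * p)) • vz s a m := by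
    simp only [Qe]
    rw [← Finset.smul_sum]
    congr 1
    rw [Finset.sum_comm]
    exact Finset.sum_congr rfl fun m _ => (Finset.sum_smul).symm
  have h2 : ∀ m : ZMod s, (∑ p : ZMod s, e s (m * p)) = if m = 0 then (s : ℂ) else 0 := by
    intro m
    rw [← sum_e s m]
    exact Finset.sum_congr rfl fun p _ => by rw [mul_comm]
  have h3 : ∑ m : ZMod s, (∑ p : ZMod s, e s (m * p)) • vz s a m = (s : ℂ) • vz s a 0 := by
    rw [Finset.sum_eq_single 0]
    · rw [h2, if_pos rfl]
    · intro m _ hm; rw [h2, if_neg hm, zero_smul]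
    · intro h; exact absurd (Finset.mem_univ 0) h
  rw [h1, h3, smul_smul, inv_mul_cancel₀ (hs0 s), one_smul, vz, if_pos rfl]

end

lemma cubic_eq_Qe (n : ℕ) (u : Fin n → Fin n → A) (p : ZMod s) (i j : Fin n) :
    cubicToSudoku s n u p i j = Qe s (u i j) p := by
  rw [cubicToSudoku, Qe]
  congr 1
  rw [← range_to_zmod s (fun m => e s (m * p) • vz s (u i j) m)]
  refine Finset.sum_congr rfl fun r hr => ?_
  have hrs := Finset.mem_range.mp hr
  have hval : ((r : ZMod s)).val = r := ZMod.val_natCast_of_lt hrs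
  congr 1
  · rw [e_mul_pow, hval, ζ]
  · by_cases h0 : r = 0
    · subst h0; simp [vz]
    · have hne : (r : ZMod s) ≠ 0 := fun h => h0 (by rw [← hval, h, ZMod.val_zero])
      rw [vz, if_neg hne, hval, if_neg h0]

end CubicAux

/-- if `u` satisfies the level-`s` cubic relations, then each
`A^p_{ij} = (1/s) Σ_r w^{rp} u_ij^r` is a projection, and the circulant matrix
`M_{(p,i),(q,j)} = A^{q-p}_{ij}` is a magic unitary: all entries are projections
and every row and column sums to `1`. -/
theorem cubic_gives_sudoku (s n : ℕ) [NeZero s] (hn : 1 ≤ n)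
    {A : Type*} [CStarAlgebra A] (u : Fin n → Fin n → A)
    (hU1 : ∀ i j, ∑ k, u i k * star (u j k) = if i = j then 1 else 0)
    (hU2 : ∀ i j, ∑ k, star (u k i) * u k j = if i = j then 1 else 0)
    (hT1 : ∀ i j, ∑ k, u k i * star (u k j) = if i = j then 1 else 0)
    (hT2 : ∀ i j, ∑ k, star (u i k) * u j k = if i = j then 1 else 0)
    (hnormal : ∀ i j, u i j * star (u i j) = star (u i j) * u i j)
    (hproj : ∀ i j, star (u i j * star (u i j)) = u i j * star (u i j) ∧
      (u i j * star (u i j)) * (u i j * star (u i j)) = u i j * star (u i j))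
    (hpow : ∀ i j, u i j ^ s = u i j * star (u i j)) :
    (∀ (p : ZMod s) (i j : Fin n),
      star (cubicToSudoku s n u p i j) = cubicToSudoku s n u p i j ∧
        cubicToSudoku s n u p i j * cubicToSudoku s n u p i j =
          cubicToSudoku s n u p i j) ∧
    (∀ (p : ZMod s) (i : Fin n),
      ∑ q : ZMod s, ∑ j : Fin n, cubicToSudoku s n u (q - p) i j = 1) ∧
    (∀ (q : ZMod s) (j : Fin n),
      ∑ p : ZMod s, ∑ i : Fin n, cubicToSudoku s n u (q - p) i j = 1) := by
  have hb : ∀ (p : ZMod s) (i j : Fin n),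
      cubicToSudoku s n u p i j = CubicAux.Qe s (u i j) p :=
    fun p i j => CubicAux.cubic_eq_Qe s n u p i j
  refine ⟨?_, ?_, ?_⟩
  · intro p i j
    rw [hb]
    exact ⟨CubicAux.Qe_star s (u i j) (hnormal i j) (hproj i j).1 (hproj i j).2 (hpow i j) p,
      CubicAux.Qe_mul s (u i j) (hnormal i j) (hproj i j).1 (hproj i j).2 (hpow i j) p⟩
  · intro p i
    rw [Finset.sum_comm]
    have hj : ∀ j : Fin n, ∑ q : ZMod s, cubicToSudoku s n u (q - p) i j
        = u i j * star (u i j) := by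
      intro j
      rw [show ∑ q : ZMod s, cubicToSudoku s n u (q - p) i j
          = ∑ q : ZMod s, CubicAux.Qe s (u i j) q from
        Fintype.sum_equiv (Equiv.subRight p) _ _ (fun q => hb (q - p) i j)]
      exact CubicAux.Qe_sum s (u i j)
    rw [Finset.sum_congr rfl fun j _ => hj j]
    simpa using hU1 i i
  · intro q j
    rw [Finset.sum_comm]
    have hi : ∀ i : Fin n, ∑ p : ZMod s, cubicToSudoku s n u (q - p) i j
        = u i j * star (u i j) := by
      intro i
      rw [show ∑ p : ZMod s, cubicToSudoku s n u (q - p) i j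
          = ∑ p : ZMod s, CubicAux.Qe s (u i j) p from
        Fintype.sum_equiv (Equiv.subLeft q) _ _ (fun p => hb (q - p) i j)]
      exact CubicAux.Qe_sum s (u i j)
    rw [Finset.sum_congr rfl fun i _ => hi i]
    simpa using hT1 j j
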